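/- For every δ > 0, every finite graph G with n vertices, every stationary distribution μ of the noisy voter model on G with noise parameter δ, every initial configuration η ∈ {0,1}^{V(G)} and every t ≥ 0, the total variation distance to stationarity satisfies ‖P_t(η,·) − μ‖ ≤ n·exp(−(2δ/(2δ+1))·t). -/

import Mathlib

open Finset

/-- Total variation distance between two (probability) measures on a finite set:
the maximum over all events `A` of `|μ₁(A) - μ₂(A)|`. -/
noncomputable def tvDist {S : Type*} [Fintype S] (μ ν : S → ℝ) : ℝ :=
  Finset.univ.powerset.sup' (Finset.powerset_nonempty _) fun A =>
    |∑ s ∈ A, μ s - ∑ s ∈ A, ν s|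

/-- Flip rate of the noisy voter model with noise `δ` at vertex `x` in configuration `η`. -/
noncomputable def nvRate {V : Type*} [Fintype V] (G : SimpleGraph V) [DecidableRel G.Adj]
    (δ : ℝ) (x : V) (η : V → Bool) : ℝ :=
  (1 / (2 * δ + 1)) *
    ((1 / (G.degree x : ℝ)) * ((Finset.univ.filter fun y => G.Adj x y ∧ η y ≠ η x).card : ℝ) + δ)

/-- The rate matrix of the noisy voter model: single-spin flips occur at rate `nvRate`,
transitions changing two or more spins have rate `0`, and diagonal entries make rows sum to `0`. -/
noncomputable def nvQ {V : Type*} [Fintype V] [DecidableEq V] (G : SimpleGraph V)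
    [DecidableRel G.Adj] (δ : ℝ) : Matrix (V → Bool) (V → Bool) ℝ := fun η η' =>
  if η = η' then -∑ x, nvRate G δ x η
  else if (Finset.univ.filter fun v => η v ≠ η' v).card = 1 then
    ∑ x ∈ Finset.univ.filter (fun v => η v ≠ η' v), nvRate G δ x η
  else 0

/-! ### Auxiliary results about matrix exponentials -/

section ExpAux

open NormedSpace

variable {ι : Type*} [Fintype ι] [DecidableEq ι]
variable {κ : Type*} [Fintype κ] [DecidableEq κ]

lemma matExp_map {E : Type*} [NormedAddCommGroup E] [NormedSpace ℝ E]
    (A : Matrix ι ι ℝ) (L : Matrix ι ι ℝ →ₗ[ℝ] E) :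
    L (exp A) = ∑' n : ℕ, ((n.factorial : ℝ)⁻¹) • L (A ^ n) := by
  letI : NormedRing (Matrix ι ι ℝ) := Matrix.linftyOpNormedRing
  letI : NormedAlgebra ℝ (Matrix ι ι ℝ) := Matrix.linftyOpNormedAlgebra
  have hs : Summable (fun n : ℕ => ((n.factorial : ℝ)⁻¹) • A ^ n) :=
    NormedSpace.expSeries_summable' (𝕂 := ℝ) A
  have hc : Continuous L := L.continuous_of_finiteDimensional
  rw [NormedSpace.exp_eq_tsum (𝕂 := ℝ)]
  refine ((hs.hasSum.map L.toAddMonoidHom hc).tsum_eq).symm.trans ?_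
  exact tsum_congr fun n => by simp [map_smul]

/-- Entry evaluation as a linear map. -/
def entryLM (i : ι) (j : κ) : Matrix ι κ ℝ →ₗ[ℝ] ℝ where
  toFun B := B i j
  map_add' _ _ := rfl
  map_smul' _ _ := rfl

/-- `vecMul` by a fixed vector as a linear map in the matrix. -/
def vecMulLM (v : ι → ℝ) : Matrix ι κ ℝ →ₗ[ℝ] (κ → ℝ) where
  toFun B := Matrix.vecMul v B
  map_add' B C := by
    ext x; simp [Matrix.vecMul, dotProduct, mul_add, Finset.sum_add_distrib]
  map_smul' r B := by
    ext x; simp [Matrix.vecMul, dotProduct, Finset.mul_sum, mul_left_comm]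

/-- Right multiplication by a fixed matrix as a linear map. -/
def mulRightLM (P : Matrix ι κ ℝ) : Matrix ι ι ℝ →ₗ[ℝ] Matrix ι κ ℝ where
  toFun B := B * P
  map_add' B C := Matrix.add_mul _ _ _
  map_smul' r B := Matrix.smul_mul _ _ _

/-- Left multiplication by a fixed matrix as a linear map. -/
def mulLeftLM (P : Matrix ι κ ℝ) : Matrix κ κ ℝ →ₗ[ℝ] Matrix ι κ ℝ where
  toFun B := P * B
  map_add' B C := Matrix.mul_add _ _ _
  map_smul' r B := Matrix.mul_smul _ _ _

lemma matExp_entry (A : Matrix ι ι ℝ) (i j : ι) :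
    exp A i j = ∑' n : ℕ, ((n.factorial : ℝ)⁻¹ * (A ^ n) i j) := by
  exact matExp_map A (entryLM i j)

lemma pow_entry_nonneg {A : Matrix ι ι ℝ} (h : ∀ i j, 0 ≤ A i j) (n : ℕ) :
    ∀ i j, 0 ≤ (A ^ n) i j := by
  induction n with
  | zero => intro i j; by_cases hij : i = j <;> simp [pow_zero, Matrix.one_apply, hij]
  | succ n ih =>
      intro i j
      rw [pow_succ, Matrix.mul_apply]
      exact Finset.sum_nonneg fun k _ => mul_nonneg (ih i k) (h k j)

lemma matExp_entry_nonneg {A : Matrix ι ι ℝ} (h : ∀ i j, 0 ≤ A i j) (i j : ι) :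
    0 ≤ exp A i j := by
  rw [matExp_entry]
  exact tsum_nonneg fun n => mul_nonneg (by positivity) (pow_entry_nonneg h n i j)

lemma matExp_nonneg_of_offdiag {A : Matrix ι ι ℝ} (h : ∀ i j, i ≠ j → 0 ≤ A i j)
    {t : ℝ} (ht : 0 ≤ t) (i j : ι) : 0 ≤ exp (t • A) i j := by
  set M : ℝ := ∑ k, |A k k| with hM
  have hAM : ∀ i j, 0 ≤ (A + M • (1 : Matrix ι ι ℝ)) i j := by
    intro i j
    by_cases hij : i = j
    · subst hij
      simp only [Matrix.add_apply, Matrix.smul_apply, Matrix.one_apply_eq, smul_eq_mul, mul_one]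
      have h1 : |A i i| ≤ M := Finset.single_le_sum (f := fun k => |A k k|)
        (fun k _ => abs_nonneg _) (Finset.mem_univ i)
      linarith [neg_abs_le (A i i)]
    · simpa [Matrix.add_apply, Matrix.one_apply, hij] using h i j hij
  have hsplit : t • A = (-(t * M)) • (1 : Matrix ι ι ℝ) + t • (A + M • (1 : Matrix ι ι ℝ)) := by
    module
  have hcomm : Commute ((-(t * M)) • (1 : Matrix ι ι ℝ)) (t • (A + M • (1 : Matrix ι ι ℝ))) :=
    (Commute.one_left _).smul_left _ |>.smul_right _
  rw [hsplit, Matrix.exp_add_of_commute _ _ hcomm]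
  have hdiag : (-(t * M)) • (1 : Matrix ι ι ℝ) = Matrix.diagonal (fun _ => -(t * M)) := by
    ext a b; by_cases hab : a = b <;> simp [Matrix.one_apply, Matrix.diagonal, hab]
  rw [hdiag, Matrix.exp_diagonal, Matrix.mul_apply]
  refine Finset.sum_nonneg fun k _ => mul_nonneg ?_ ?_
  · by_cases hik : i = k
    · subst hik
      simp only [Matrix.diagonal_apply_eq]
      rw [Pi.exp_def, ← Real.exp_eq_exp_ℝ]
      exact (Real.exp_pos _).le
    · simp [Matrix.diagonal_apply_ne _ hik]
  · exact matExp_entry_nonneg (fun a b => smul_nonneg ht (hAM a b)) k j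

lemma matExp_vecMul_eigen (A : Matrix ι ι ℝ) (v : ι → ℝ) (c : ℝ)
    (h : Matrix.vecMul v A = c • v) :
    Matrix.vecMul v (exp A) = Real.exp c • v := by
  have hpow : ∀ n : ℕ, Matrix.vecMul v (A ^ n) = (c ^ n) • v := by
    intro n
    induction n with
    | zero => simp
    | succ n ih =>
        rw [pow_succ, ← Matrix.vecMul_vecMul, ih, Matrix.smul_vecMul, h, smul_smul, pow_succ]
  have key := matExp_map A (vecMulLM v)
  simp only [vecMulLM, LinearMap.coe_mk, AddHom.coe_mk, hpow] at key
  rw [key]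
  have hsum : Summable (fun n : ℕ => ((n.factorial : ℝ)⁻¹) * c ^ n) := by
    simpa [div_eq_mul_inv, mul_comm] using Real.summable_pow_div_factorial c
  have : ∑' n : ℕ, ((n.factorial : ℝ)⁻¹) • ((c ^ n) • v)
      = (∑' n : ℕ, ((n.factorial : ℝ)⁻¹) * c ^ n) • v := by
    rw [← hsum.tsum_smul_const]
    exact tsum_congr fun n => by rw [smul_smul]
  rw [this]
  congr 1
  rw [Real.exp_eq_exp_ℝ, NormedSpace.exp_eq_tsum (𝕂 := ℝ)]
  exact (tsum_congr fun n => by rw [smul_eq_mul]).symm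

lemma matExp_intertwine (A : Matrix ι ι ℝ) (B : Matrix κ κ ℝ) (P : Matrix ι κ ℝ)
    (h : A * P = P * B) : exp A * P = P * exp B := by
  letI : NormedAddCommGroup (Matrix ι κ ℝ) := Matrix.linftyOpNormedAddCommGroup
  letI : NormedSpace ℝ (Matrix ι κ ℝ) := Matrix.linftyOpNormedSpace
  have hpow : ∀ n : ℕ, A ^ n * P = P * B ^ n := by
    intro n
    induction n with
    | zero => simp
    | succ n ih =>
        rw [pow_succ, pow_succ, Matrix.mul_assoc, h, ← Matrix.mul_assoc, ih, Matrix.mul_assoc]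
  have k1 := matExp_map A (mulRightLM P)
  have k2 := matExp_map B (mulLeftLM P)
  simp only [mulRightLM, mulLeftLM, LinearMap.coe_mk, AddHom.coe_mk] at k1 k2
  rw [k1, k2]
  exact tsum_congr fun n => by rw [hpow n]

lemma triple_entry (X : Matrix ι ι ℝ) (Mm : Matrix ι κ ℝ) (Y : Matrix κ κ ℝ) (i : ι) (j : κ) :
    (X * Mm * Y) i j = ∑ k, ∑ l, X i k * (Mm k l * Y l j) := by
  rw [Matrix.mul_apply]
  simp_rw [Matrix.mul_apply, Finset.sum_mul]
  rw [Finset.sum_comm]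
  exact Finset.sum_congr rfl fun k _ => Finset.sum_congr rfl fun l _ => by ring

lemma matExp_comparison (A : Matrix ι ι ℝ) (N : Matrix κ κ ℝ) (Gm : Matrix ι κ ℝ) {t : ℝ}
    (ht : 0 ≤ t)
    (hA : ∀ i j, i ≠ j → 0 ≤ A i j) (hN : ∀ i j, i ≠ j → 0 ≤ N i j)
    (hle : ∀ i j, (A * Gm) i j ≤ (Gm * N) i j) (i : ι) (j : κ) :
    (exp (t • A) * Gm) i j ≤ (Gm * exp (t • N)) i j := by
  letI : NormedRing (Matrix ι ι ℝ) := Matrix.linftyOpNormedRing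
  letI : NormedAlgebra ℝ (Matrix ι ι ℝ) := Matrix.linftyOpNormedAlgebra
  letI : NormedRing (Matrix κ κ ℝ) := Matrix.linftyOpNormedRing
  letI : NormedAlgebra ℝ (Matrix κ κ ℝ) := Matrix.linftyOpNormedAlgebra
  set f : ℝ → Matrix ι ι ℝ := fun s => exp (s • A) with hf_def
  set g : ℝ → Matrix κ κ ℝ := fun s => exp ((t - s) • N) with hg_def
  have hfd : ∀ (s : ℝ) (p : ι) (q : ι),
      HasDerivAt (fun u => f u p q) ((f s * A) p q) s := by
    intro s p q
    have h1 : HasDerivAt (fun u : ℝ => exp (u • A)) (exp (s • A) * A) s :=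
      hasDerivAt_exp_smul_const (𝕂 := ℝ) A s
    have h4 := ((entryLM (ι := ι) (κ := ι) p q).toContinuousLinearMap).hasFDerivAt.comp_hasDerivAt
      s h1
    exact h4
  have hgd : ∀ (s : ℝ) (p : κ) (q : κ),
      HasDerivAt (fun u => g u p q) ((-(N * g s)) p q) s := by
    intro s p q
    have h1 : HasDerivAt (fun u : ℝ => exp (u • N)) (N * exp ((t - s) • N)) (t - s) :=
      hasDerivAt_exp_smul_const' (𝕂 := ℝ) N (t - s)
    have h2 : HasDerivAt (fun u : ℝ => t - u) (-1 : ℝ) s := by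
      simpa using (hasDerivAt_id s).const_sub t
    have h3 : HasDerivAt (fun u : ℝ => exp ((t - u) • N))
        ((-1 : ℝ) • (N * exp ((t - s) • N))) s := h1.scomp s h2
    have h4 := ((entryLM (ι := κ) (κ := κ) p q).toContinuousLinearMap).hasFDerivAt.comp_hasDerivAt
      s h3
    have h5 : (-(N * g s)) p q
        = (entryLM (ι := κ) (κ := κ) p q).toContinuousLinearMap ((-1 : ℝ) • (N * exp ((t - s) • N))) := by
      show (-(N * g s)) p q = ((-1 : ℝ) • (N * exp ((t - s) • N))) p q
      simp [hg_def]
    rw [h5]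
    exact h4
  set F : ℝ → ℝ := fun s => ∑ k, ∑ l, f s i k * (Gm k l * g s l j) with hF_def
  have hFd : ∀ s : ℝ, HasDerivAt F
      (∑ k, ∑ l, ((f s * A) i k * (Gm k l * g s l j)
        + f s i k * (Gm k l * (-(N * g s)) l j))) s := by
    intro s
    refine HasDerivAt.fun_sum fun k _ => ?_
    refine HasDerivAt.fun_sum fun l _ => ?_
    exact (hfd s i k).mul ((hgd s l j).const_mul (Gm k l))
  have hderiv_le : ∀ s ∈ Set.Ioo 0 t, deriv F s ≤ 0 := by
    intro s hs
    rw [(hFd s).deriv]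
    have key : ∑ k, ∑ l, ((f s * A) i k * (Gm k l * g s l j)
        + f s i k * (Gm k l * (-(N * g s)) l j))
        = ∑ k, ∑ l, f s i k * ((A * Gm - Gm * N) k l * g s l j) := by
      have eL : ∑ k, ∑ l, (f s * A) i k * (Gm k l * g s l j)
          = ∑ k, ∑ l, f s i k * ((A * Gm) k l * g s l j) := by
        rw [← triple_entry, ← triple_entry, Matrix.mul_assoc (f s) A Gm]
      have eR : ∑ k, ∑ l, f s i k * ((Gm * N) k l * g s l j)
          = ∑ k, ∑ l, f s i k * (Gm k l * (N * g s) l j) := by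
        rw [← triple_entry, ← triple_entry, Matrix.mul_assoc (f s) (Gm * N) (g s),
          Matrix.mul_assoc Gm N (g s), Matrix.mul_assoc (f s) Gm (N * g s)]
      calc ∑ k, ∑ l, ((f s * A) i k * (Gm k l * g s l j)
              + f s i k * (Gm k l * (-(N * g s)) l j))
          = (∑ k, ∑ l, (f s * A) i k * (Gm k l * g s l j))
            - ∑ k, ∑ l, f s i k * (Gm k l * (N * g s) l j) := by
            rw [← Finset.sum_sub_distrib]
            refine Finset.sum_congr rfl fun k _ => ?_
            rw [← Finset.sum_sub_distrib]
            refine Finset.sum_congr rfl fun l _ => ?_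
            simp only [Matrix.neg_apply]
            ring
        _ = (∑ k, ∑ l, f s i k * ((A * Gm) k l * g s l j))
            - ∑ k, ∑ l, f s i k * ((Gm * N) k l * g s l j) := by rw [eL, eR]
        _ = ∑ k, ∑ l, f s i k * ((A * Gm - Gm * N) k l * g s l j) := by
            rw [← Finset.sum_sub_distrib]
            refine Finset.sum_congr rfl fun k _ => ?_
            rw [← Finset.sum_sub_distrib]
            refine Finset.sum_congr rfl fun l _ => ?_
            simp only [Matrix.sub_apply]
            ring
    rw [key]
    refine Finset.sum_nonpos fun k _ => Finset.sum_nonpos fun l _ => ?_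
    have hf0 : 0 ≤ f s i k := matExp_nonneg_of_offdiag hA hs.1.le i k
    have hg0 : 0 ≤ g s l j := matExp_nonneg_of_offdiag hN (by linarith [hs.2] : (0:ℝ) ≤ t - s) l j
    have hmid : (A * Gm - Gm * N) k l ≤ 0 := by
      simpa [Matrix.sub_apply, sub_nonpos] using hle k l
    exact mul_nonpos_of_nonneg_of_nonpos hf0
      (mul_nonpos_of_nonpos_of_nonneg hmid hg0)
  have hcont : ContinuousOn F (Set.Icc 0 t) :=
    fun s _ => ((hFd s).differentiableAt.continuousAt).continuousWithinAt
  have hdiff : DifferentiableOn ℝ F (interior (Set.Icc 0 t)) :=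
    fun s _ => (hFd s).differentiableAt.differentiableWithinAt
  have hanti : AntitoneOn F (Set.Icc 0 t) := by
    refine antitoneOn_of_deriv_nonpos (convex_Icc 0 t) hcont hdiff ?_
    intro s hs
    rw [interior_Icc] at hs
    exact hderiv_le s hs
  have hFt : F t = (exp (t • A) * Gm) i j := by
    have hgt : g t = 1 := by
      rw [hg_def]; simp [NormedSpace.exp_zero]
    calc F t = (f t * Gm * g t) i j := (triple_entry _ _ _ _ _).symm
      _ = (exp (t • A) * Gm) i j := by rw [hgt, Matrix.mul_one]
  have hF0 : F 0 = (Gm * exp (t • N)) i j := by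
    have hg0 : g 0 = exp (t • N) := by rw [hg_def]; simp
    have hf0 : f 0 = 1 := by rw [hf_def]; simp [NormedSpace.exp_zero]
    calc F 0 = (f 0 * Gm * g 0) i j := (triple_entry _ _ _ _ _).symm
      _ = (Gm * exp (t • N)) i j := by rw [hg0, hf0, Matrix.one_mul]
  have := hanti (Set.left_mem_Icc.2 ht) (Set.right_mem_Icc.2 ht) ht
  rw [hFt, hF0] at this
  exact this

lemma vecMul_matsmul (v : ι → ℝ) (c : ℝ) (M : Matrix ι κ ℝ) :
    Matrix.vecMul v (c • M) = c • Matrix.vecMul v M := by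
  ext x
  simp [Matrix.vecMul, dotProduct, Finset.mul_sum, mul_left_comm]

end ExpAux

/-! ### The noisy voter model: flips and coupling -/

section NVAux

variable {V : Type*} [Fintype V] [DecidableEq V]

/-- Flip a configuration at a single vertex. -/
def nvFlip (a : V → Bool) (x : V) : V → Bool := Function.update a x (!a x)

lemma nvFlip_apply_self (a : V → Bool) (x : V) : nvFlip a x x = !a x := by
  simp [nvFlip]

lemma nvFlip_apply_ne (a : V → Bool) {x v : V} (h : v ≠ x) : nvFlip a x v = a v := by
  simp [nvFlip, Function.update_of_ne h]

lemma nvFlip_ne (a : V → Bool) (x : V) : nvFlip a x ≠ a := by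
  intro h
  have := congrFun h x
  rw [nvFlip_apply_self] at this
  cases hax : a x <;> rw [hax] at this <;> simp at this

lemma nvFlip_eq_iff (a s : V → Bool) (x : V) :
    s = nvFlip a x ↔ (univ.filter fun v => a v ≠ s v) = {x} := by
  constructor
  · rintro rfl
    ext v
    simp only [mem_filter, mem_univ, true_and, mem_singleton]
    by_cases hv : v = x
    · subst hv; simp [nvFlip_apply_self]
    · simp [nvFlip_apply_ne a hv, hv]
  · intro h
    funext v
    by_cases hv : v = x
    · subst hv
      have hx : a v ≠ s v := by
        have : v ∈ univ.filter fun u => a u ≠ s u := h ▸ mem_singleton_self v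
        simpa using this
      rw [nvFlip_apply_self]
      cases hav : a v <;> cases hsv : s v <;> simp_all
    · have : a v = s v := by
        by_contra hne
        have : v ∈ ({x} : Finset V) := h ▸ (by simpa using hne)
        simp_all
      rw [nvFlip_apply_ne a hv, this]

variable (G : SimpleGraph V) [DecidableRel G.Adj] (δ : ℝ)

lemma nvRate_nonneg (hδ : 0 < δ) (x : V) (a : V → Bool) : 0 ≤ nvRate G δ x a := by
  unfold nvRate
  have h1 : (0:ℝ) < 2 * δ + 1 := by linarith
  positivity

/-- The key collapse identity for a single voter-model row. -/
lemma nvQ_row_eq (a s : V → Bool) :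
    (∑ x : V, if s = nvFlip a x then nvRate G δ x a else 0)
      - (if s = a then ∑ x : V, nvRate G δ x a else 0) = nvQ G δ a s := by
  by_cases hsa : s = a
  · subst hsa
    have hzero : ∀ x : V, (if s = nvFlip s x then nvRate G δ x s else 0) = 0 := by
      intro x
      rw [if_neg]
      exact fun h => nvFlip_ne s x h.symm
    rw [Finset.sum_congr rfl fun x _ => hzero x]
    simp [nvQ]
  · have hsa' : a ≠ s := fun h => hsa h.symm
    rw [if_neg hsa]
    by_cases hcard : (univ.filter fun v => a v ≠ s v).card = 1
    · obtain ⟨x₀, hx₀⟩ := Finset.card_eq_one.mp hcard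
      have hflip : ∀ x : V, (s = nvFlip a x) ↔ x = x₀ := by
        intro x
        rw [nvFlip_eq_iff, hx₀]
        constructor
        · intro h; exact (Finset.singleton_injective h).symm
        · rintro rfl; rfl
      have : ∀ x : V, (if s = nvFlip a x then nvRate G δ x a else 0)
          = (if x = x₀ then nvRate G δ x a else 0) := by
        intro x; simp only [hflip x]
      rw [Finset.sum_congr rfl fun x _ => this x, Finset.sum_ite_eq' univ x₀]
      simp only [mem_univ, if_true, sub_zero]
      rw [nvQ, if_neg hsa', hx₀]
      simp
    · have hzero : ∀ x : V, (if s = nvFlip a x then nvRate G δ x a else 0) = 0 := by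
        intro x
        rw [if_neg]
        intro h
        exact hcard (by rw [(nvFlip_eq_iff a s x).mp h]; simp)
      rw [Finset.sum_congr rfl fun x _ => hzero x]
      simp [nvQ, if_neg hsa', if_neg hcard]

/-- Coupled flip-together rate. -/
noncomputable def cmr (x : V) (p : (V → Bool) × (V → Bool)) : ℝ :=
  if p.1 x = p.2 x then min (nvRate G δ x p.1) (nvRate G δ x p.2) else 0

/-- Generator of the coupled noisy voter model on pairs of configurations. -/
noncomputable def cplQ : Matrix ((V → Bool) × (V → Bool)) ((V → Bool) × (V → Bool)) ℝ :=
  fun p q =>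
    ∑ x : V,
      ((if q = (nvFlip p.1 x, p.2) then nvRate G δ x p.1 - cmr G δ x p else 0)
     + (if q = (p.1, nvFlip p.2 x) then nvRate G δ x p.2 - cmr G δ x p else 0)
     + (if q = (nvFlip p.1 x, nvFlip p.2 x) then cmr G δ x p else 0)
     - (if q = p then nvRate G δ x p.1 + nvRate G δ x p.2 - cmr G δ x p else 0))

lemma cmr_nonneg (hδ : 0 < δ) (x : V) (p : (V → Bool) × (V → Bool)) :
    0 ≤ cmr G δ x p := by
  unfold cmr
  split
  · exact le_min (nvRate_nonneg G δ hδ x p.1) (nvRate_nonneg G δ hδ x p.2)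
  · exact le_refl 0

lemma cmr_le_left (hδ : 0 < δ) (x : V) (p : (V → Bool) × (V → Bool)) :
    cmr G δ x p ≤ nvRate G δ x p.1 := by
  unfold cmr
  split
  · exact min_le_left _ _
  · exact nvRate_nonneg G δ hδ x p.1

lemma cmr_le_right (hδ : 0 < δ) (x : V) (p : (V → Bool) × (V → Bool)) :
    cmr G δ x p ≤ nvRate G δ x p.2 := by
  unfold cmr
  split
  · exact min_le_right _ _
  · exact nvRate_nonneg G δ hδ x p.2

lemma cplQ_offdiag_nonneg (hδ : 0 < δ) (p q : (V → Bool) × (V → Bool)) (hpq : p ≠ q) :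
    0 ≤ cplQ G δ p q := by
  unfold cplQ
  refine Finset.sum_nonneg fun x _ => ?_
  have h4 : (if q = p then nvRate G δ x p.1 + nvRate G δ x p.2 - cmr G δ x p else 0) = 0 :=
    if_neg (fun h => hpq h.symm)
  rw [h4, sub_zero]
  have h1 : (0:ℝ) ≤ if q = (nvFlip p.1 x, p.2) then nvRate G δ x p.1 - cmr G δ x p else 0 := by
    split
    · linarith [cmr_le_left G δ hδ x p]
    · exact le_refl 0
  have h2 : (0:ℝ) ≤ if q = (p.1, nvFlip p.2 x) then nvRate G δ x p.2 - cmr G δ x p else 0 := by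
    split
    · linarith [cmr_le_right G δ hδ x p]
    · exact le_refl 0
  have h3 : (0:ℝ) ≤ if q = (nvFlip p.1 x, nvFlip p.2 x) then cmr G δ x p else 0 := by
    split
    · exact cmr_nonneg G δ hδ x p
    · exact le_refl 0
  linarith

end NVAux

section CPL2

variable {V : Type*} [Fintype V] [DecidableEq V]
variable (G : SimpleGraph V) [DecidableRel G.Adj] (δ : ℝ)

/-- First-coordinate projection matrix. -/
def proj1 : Matrix ((V → Bool) × (V → Bool)) (V → Bool) ℝ := fun p s => if p.1 = s then 1 else 0

/-- Second-coordinate projection matrix. -/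
def proj2 : Matrix ((V → Bool) × (V → Bool)) (V → Bool) ℝ := fun p s => if p.2 = s then 1 else 0

lemma cplQ_proj1 : cplQ G δ * proj1 (V := V) = proj1 (V := V) * nvQ G δ := by
  ext p s
  rw [Matrix.mul_apply, Matrix.mul_apply]
  have hR : ∑ s', proj1 p s' * nvQ G δ s' s = nvQ G δ p.1 s := by
    simp only [proj1, ite_mul, one_mul, zero_mul]
    rw [Finset.sum_ite_eq univ p.1 (fun s' => nvQ G δ s' s)]
    simp
  rw [hR]
  simp only [cplQ, Finset.sum_mul]
  rw [Finset.sum_comm]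
  have step : ∀ x : V, (∑ q : (V → Bool) × (V → Bool),
      (((if q = (nvFlip p.1 x, p.2) then nvRate G δ x p.1 - cmr G δ x p else 0)
       + (if q = (p.1, nvFlip p.2 x) then nvRate G δ x p.2 - cmr G δ x p else 0)
       + (if q = (nvFlip p.1 x, nvFlip p.2 x) then cmr G δ x p else 0)
       - (if q = p then nvRate G δ x p.1 + nvRate G δ x p.2 - cmr G δ x p else 0))
        * proj1 q s))
      = (if s = nvFlip p.1 x then nvRate G δ x p.1 else 0)
        - (if s = p.1 then nvRate G δ x p.1 else 0) := by
    intro x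
    simp only [add_mul, sub_mul, ite_mul, zero_mul]
    rw [Finset.sum_sub_distrib, Finset.sum_add_distrib, Finset.sum_add_distrib,
      Finset.sum_ite_eq' univ ((nvFlip p.1 x, p.2) : (V → Bool) × (V → Bool)),
      Finset.sum_ite_eq' univ ((p.1, nvFlip p.2 x) : (V → Bool) × (V → Bool)),
      Finset.sum_ite_eq' univ ((nvFlip p.1 x, nvFlip p.2 x) : (V → Bool) × (V → Bool)),
      Finset.sum_ite_eq' univ p]
    simp only [mem_univ, if_true]
    by_cases h1 : nvFlip p.1 x = s <;> by_cases h2 : p.1 = s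
    · exact absurd (h1.trans h2.symm) (nvFlip_ne p.1 x)
    · rw [if_pos h1.symm, if_neg (fun h => h2 h.symm)]
      simp only [proj1, if_pos h1, if_neg h2, if_pos (rfl : nvFlip p.1 x = nvFlip p.1 x)]
      ring
    · rw [if_neg (fun h => h1 h.symm), if_pos h2.symm]
      simp only [proj1, if_neg h1, if_pos h2]
      ring
    · rw [if_neg (fun h => h1 h.symm), if_neg (fun h => h2 h.symm)]
      simp only [proj1, if_neg h1, if_neg h2]
      ring
  rw [Finset.sum_congr rfl fun x _ => step x, Finset.sum_sub_distrib]
  have : ∑ x : V, (if s = p.1 then nvRate G δ x p.1 else 0)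
      = (if s = p.1 then ∑ x : V, nvRate G δ x p.1 else 0) := by
    split_ifs <;> simp
  rw [this, nvQ_row_eq]

lemma cplQ_proj2 : cplQ G δ * proj2 (V := V) = proj2 (V := V) * nvQ G δ := by
  ext p s
  rw [Matrix.mul_apply, Matrix.mul_apply]
  have hR : ∑ s', proj2 p s' * nvQ G δ s' s = nvQ G δ p.2 s := by
    simp only [proj2, ite_mul, one_mul, zero_mul]
    rw [Finset.sum_ite_eq univ p.2 (fun s' => nvQ G δ s' s)]
    simp
  rw [hR]
  simp only [cplQ, Finset.sum_mul]
  rw [Finset.sum_comm]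
  have step : ∀ x : V, (∑ q : (V → Bool) × (V → Bool),
      (((if q = (nvFlip p.1 x, p.2) then nvRate G δ x p.1 - cmr G δ x p else 0)
       + (if q = (p.1, nvFlip p.2 x) then nvRate G δ x p.2 - cmr G δ x p else 0)
       + (if q = (nvFlip p.1 x, nvFlip p.2 x) then cmr G δ x p else 0)
       - (if q = p then nvRate G δ x p.1 + nvRate G δ x p.2 - cmr G δ x p else 0))
        * proj2 q s))
      = (if s = nvFlip p.2 x then nvRate G δ x p.2 else 0)
        - (if s = p.2 then nvRate G δ x p.2 else 0) := by
    intro x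
    simp only [add_mul, sub_mul, ite_mul, zero_mul]
    rw [Finset.sum_sub_distrib, Finset.sum_add_distrib, Finset.sum_add_distrib,
      Finset.sum_ite_eq' univ ((nvFlip p.1 x, p.2) : (V → Bool) × (V → Bool)),
      Finset.sum_ite_eq' univ ((p.1, nvFlip p.2 x) : (V → Bool) × (V → Bool)),
      Finset.sum_ite_eq' univ ((nvFlip p.1 x, nvFlip p.2 x) : (V → Bool) × (V → Bool)),
      Finset.sum_ite_eq' univ p]
    simp only [mem_univ, if_true]
    by_cases h1 : nvFlip p.2 x = s <;> by_cases h2 : p.2 = s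
    · exact absurd (h1.trans h2.symm) (nvFlip_ne p.2 x)
    · rw [if_pos h1.symm, if_neg (fun h => h2 h.symm)]
      simp only [proj2, if_pos h1, if_neg h2]
      ring
    · rw [if_neg (fun h => h1 h.symm), if_pos h2.symm]
      simp only [proj2, if_neg h1, if_pos h2]
      ring
    · rw [if_neg (fun h => h1 h.symm), if_neg (fun h => h2 h.symm)]
      simp only [proj2, if_neg h1, if_neg h2]
      ring
  rw [Finset.sum_congr rfl fun x _ => step x, Finset.sum_sub_distrib]
  have : ∑ x : V, (if s = p.2 then nvRate G δ x p.2 else 0)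
      = (if s = p.2 then ∑ x : V, nvRate G δ x p.2 else 0) := by
    split_ifs <;> simp
  rw [this, nvQ_row_eq]

/-- The comparison matrix on vertices. -/
noncomputable def NmatV : Matrix V V ℝ := fun y x =>
  (if G.Adj x y then (1 / (2 * δ + 1)) / (G.degree x : ℝ) else 0) - (if y = x then 1 else 0)

/-- The per-vertex disagreement indicator matrix. -/
def GmMat : Matrix ((V → Bool) × (V → Bool)) V ℝ := fun p x => if p.1 x = p.2 x then 0 else 1

lemma GmMat_nonneg (p : (V → Bool) × (V → Bool)) (x : V) : 0 ≤ GmMat p x := by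
  unfold GmMat; split <;> norm_num

lemma GmMat_le_one (p : (V → Bool) × (V → Bool)) (x : V) : GmMat p x ≤ 1 := by
  unfold GmMat; split <;> norm_num

lemma NmatV_offdiag (hδ : 0 < δ) (y x : V) (h : y ≠ x) : 0 ≤ NmatV G δ y x := by
  unfold NmatV
  rw [if_neg h, sub_zero]
  split
  · have h1 : (0:ℝ) < 2 * δ + 1 := by linarith
    positivity
  · exact le_refl 0

end CPL2

section CPL3

variable {V : Type*} [Fintype V] [DecidableEq V]
variable (G : SimpleGraph V) [DecidableRel G.Adj] (δ : ℝ)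

lemma GmN_entry (p : (V → Bool) × (V → Bool)) (x : V) :
    ((GmMat (V := V)) * NmatV G δ) p x
      = (1 / (2 * δ + 1)) / (G.degree x : ℝ)
          * ((univ.filter fun y => G.Adj x y ∧ p.1 y ≠ p.2 y).card : ℝ)
        - (if p.1 x = p.2 x then 0 else 1) := by
  rw [Matrix.mul_apply]
  simp only [NmatV, mul_sub]
  rw [Finset.sum_sub_distrib]
  congr 1
  · have h1 : ∀ y : V, GmMat p y * (if G.Adj x y then (1 / (2 * δ + 1)) / (G.degree x : ℝ) else 0)
        = (if G.Adj x y ∧ p.1 y ≠ p.2 y then (1 / (2 * δ + 1)) / (G.degree x : ℝ) else 0) := by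
      intro y
      unfold GmMat
      split_ifs with hg ha hand hand <;> simp_all
    rw [Finset.sum_congr rfl fun y _ => h1 y, ← Finset.sum_filter, Finset.sum_const,
      nsmul_eq_mul, mul_comm]
  · have h2 : ∀ y : V, GmMat p y * (if y = x then (1:ℝ) else 0)
        = (if y = x then GmMat p y else 0) := by
      intro y; split_ifs <;> ring
    rw [Finset.sum_congr rfl fun y _ => h2 y, Finset.sum_ite_eq' univ x]
    simp [GmMat]

lemma cplQGm_entry (p : (V → Bool) × (V → Bool)) (x : V) :
    (cplQ G δ * GmMat (V := V)) p x =
      if p.1 x = p.2 x then nvRate G δ x p.1 + nvRate G δ x p.2 - 2 * cmr G δ x p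
      else -(nvRate G δ x p.1 + nvRate G δ x p.2) := by
  rw [Matrix.mul_apply]
  simp only [cplQ, Finset.sum_mul]
  rw [Finset.sum_comm]
  have step : ∀ x' : V, (∑ q : (V → Bool) × (V → Bool),
      (((if q = (nvFlip p.1 x', p.2) then nvRate G δ x' p.1 - cmr G δ x' p else 0)
       + (if q = (p.1, nvFlip p.2 x') then nvRate G δ x' p.2 - cmr G δ x' p else 0)
       + (if q = (nvFlip p.1 x', nvFlip p.2 x') then cmr G δ x' p else 0)
       - (if q = p then nvRate G δ x' p.1 + nvRate G δ x' p.2 - cmr G δ x' p else 0))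
        * GmMat q x))
      = (if x' = x then
          (if p.1 x = p.2 x then nvRate G δ x p.1 + nvRate G δ x p.2 - 2 * cmr G δ x p
           else -(nvRate G δ x p.1 + nvRate G δ x p.2)) else 0) := by
    intro x'
    simp only [add_mul, sub_mul, ite_mul, zero_mul]
    rw [Finset.sum_sub_distrib, Finset.sum_add_distrib, Finset.sum_add_distrib,
      Finset.sum_ite_eq' univ ((nvFlip p.1 x', p.2) : (V → Bool) × (V → Bool)),
      Finset.sum_ite_eq' univ ((p.1, nvFlip p.2 x') : (V → Bool) × (V → Bool)),
      Finset.sum_ite_eq' univ ((nvFlip p.1 x', nvFlip p.2 x') : (V → Bool) × (V → Bool)),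
      Finset.sum_ite_eq' univ p]
    simp only [mem_univ, if_true]
    by_cases hx : x' = x
    · subst hx
      by_cases h : p.1 x' = p.2 x'
      · rw [if_pos rfl, if_pos h]
        have e1 : GmMat (nvFlip p.1 x', p.2) x' = 1 := by
          show (if nvFlip p.1 x' x' = p.2 x' then (0:ℝ) else 1) = 1
          rw [nvFlip_apply_self]
          cases h1 : p.1 x' <;> cases h2 : p.2 x' <;> simp_all
        have e2 : GmMat (p.1, nvFlip p.2 x') x' = 1 := by
          show (if p.1 x' = nvFlip p.2 x' x' then (0:ℝ) else 1) = 1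
          rw [nvFlip_apply_self]
          cases h1 : p.1 x' <;> cases h2 : p.2 x' <;> simp_all
        have e3 : GmMat (nvFlip p.1 x', nvFlip p.2 x') x' = 0 := by
          show (if nvFlip p.1 x' x' = nvFlip p.2 x' x' then (0:ℝ) else 1) = 0
          rw [nvFlip_apply_self, nvFlip_apply_self]
          cases h1 : p.1 x' <;> cases h2 : p.2 x' <;> simp_all
        have e4 : GmMat p x' = 0 := by unfold GmMat; rw [if_pos h]
        rw [e1, e2, e3, e4]
        ring
      · rw [if_pos rfl, if_neg h]
        have hm : cmr G δ x' p = 0 := by unfold cmr; rw [if_neg h]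
        have e1 : GmMat (nvFlip p.1 x', p.2) x' = 0 := by
          show (if nvFlip p.1 x' x' = p.2 x' then (0:ℝ) else 1) = 0
          rw [nvFlip_apply_self]
          cases h1 : p.1 x' <;> cases h2 : p.2 x' <;> simp_all
        have e2 : GmMat (p.1, nvFlip p.2 x') x' = 0 := by
          show (if p.1 x' = nvFlip p.2 x' x' then (0:ℝ) else 1) = 0
          rw [nvFlip_apply_self]
          cases h1 : p.1 x' <;> cases h2 : p.2 x' <;> simp_all
        have e3 : GmMat (nvFlip p.1 x', nvFlip p.2 x') x' = 1 := by
          show (if nvFlip p.1 x' x' = nvFlip p.2 x' x' then (0:ℝ) else 1) = 1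
          rw [nvFlip_apply_self, nvFlip_apply_self]
          cases h1 : p.1 x' <;> cases h2 : p.2 x' <;> simp_all
        have e4 : GmMat p x' = 1 := by unfold GmMat; rw [if_neg h]
        rw [e1, e2, e3, e4, hm]
        ring
    · rw [if_neg hx]
      have hxx : x ≠ x' := fun h => hx h.symm
      have e1 : GmMat (nvFlip p.1 x', p.2) x = GmMat p x := by
        show (if nvFlip p.1 x' x = p.2 x then (0:ℝ) else 1) = _
        rw [nvFlip_apply_ne p.1 hxx]; rfl
      have e2 : GmMat (p.1, nvFlip p.2 x') x = GmMat p x := by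
        show (if p.1 x = nvFlip p.2 x' x then (0:ℝ) else 1) = _
        rw [nvFlip_apply_ne p.2 hxx]; rfl
      have e3 : GmMat (nvFlip p.1 x', nvFlip p.2 x') x = GmMat p x := by
        show (if nvFlip p.1 x' x = nvFlip p.2 x' x then (0:ℝ) else 1) = _
        rw [nvFlip_apply_ne p.1 hxx, nvFlip_apply_ne p.2 hxx]; rfl
      rw [e1, e2, e3]
      ring
  rw [Finset.sum_congr rfl fun x' _ => step x', Finset.sum_ite_eq' univ x]
  simp

lemma key_ineq (hδ : 0 < δ) (hdeg : ∀ v, 1 ≤ G.degree v)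
    (p : (V → Bool) × (V → Bool)) (x : V) :
    (cplQ G δ * GmMat (V := V)) p x ≤ (GmMat (V := V) * NmatV G δ) p x := by
  rw [cplQGm_entry, GmN_entry]
  have h2d : (0:ℝ) < 2 * δ + 1 := by linarith
  have hd0 : (0:ℝ) < (G.degree x : ℝ) := by
    have := hdeg x; exact_mod_cast Nat.lt_of_lt_of_le Nat.zero_lt_one this
  set a := p.1 with ha
  set b := p.2 with hb
  set n1 := (univ.filter fun y => G.Adj x y ∧ a y ≠ a x).card with hn1
  set n2 := (univ.filter fun y => G.Adj x y ∧ b y ≠ b x).card with hn2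
  set D := (univ.filter fun y => G.Adj x y ∧ a y ≠ b y).card with hD
  have hr1 : nvRate G δ x a = (1 / (2 * δ + 1)) * ((1 / (G.degree x : ℝ)) * (n1 : ℝ) + δ) := rfl
  have hr2 : nvRate G δ x b = (1 / (2 * δ + 1)) * ((1 / (G.degree x : ℝ)) * (n2 : ℝ) + δ) := rfl
  by_cases h : a x = b x
  · rw [if_pos h, if_pos h, sub_zero]
    have hcount1 : n1 ≤ n2 + D := by
      refine le_trans (Finset.card_le_card ?_) (Finset.card_union_le _ _)
      intro y hy
      simp only [mem_filter, mem_univ, true_and, Finset.mem_union] at hy ⊢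
      obtain ⟨hadj, hne⟩ := hy
      by_cases hab : a y = b y
      · exact Or.inl ⟨hadj, by rw [← hab, ← h]; exact hne⟩
      · exact Or.inr ⟨hadj, hab⟩
    have hcount2 : n2 ≤ n1 + D := by
      refine le_trans (Finset.card_le_card ?_) (Finset.card_union_le _ _)
      intro y hy
      simp only [mem_filter, mem_univ, true_and, Finset.mem_union] at hy ⊢
      obtain ⟨hadj, hne⟩ := hy
      by_cases hab : a y = b y
      · exact Or.inl ⟨hadj, by rw [hab, h]; exact hne⟩
      · exact Or.inr ⟨hadj, fun hc => hab hc⟩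
    have hcmr : cmr G δ x p = min (nvRate G δ x a) (nvRate G δ x b) := by
      unfold cmr; rw [if_pos h]
    rw [hcmr]
    have hc1 : (n1 : ℝ) ≤ (n2 : ℝ) + (D : ℝ) := by exact_mod_cast hcount1
    have hc2 : (n2 : ℝ) ≤ (n1 : ℝ) + (D : ℝ) := by exact_mod_cast hcount2
    rcases le_total (nvRate G δ x a) (nvRate G δ x b) with hle | hle
    · rw [min_eq_left hle, hr1, hr2]
      have hpos : (0:ℝ) ≤ 1 / (2 * δ + 1) / (G.degree x : ℝ) := by positivity
      have := mul_le_mul_of_nonneg_left (sub_le_iff_le_add'.mpr hc2 :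
        (n2 : ℝ) - (n1 : ℝ) ≤ (D : ℝ)) hpos
      calc (1 / (2 * δ + 1)) * ((1 / (G.degree x : ℝ)) * (n1 : ℝ) + δ)
            + (1 / (2 * δ + 1)) * ((1 / (G.degree x : ℝ)) * (n2 : ℝ) + δ)
            - 2 * ((1 / (2 * δ + 1)) * ((1 / (G.degree x : ℝ)) * (n1 : ℝ) + δ))
          = 1 / (2 * δ + 1) / (G.degree x : ℝ) * ((n2 : ℝ) - (n1 : ℝ)) := by
            field_simp; ring
        _ ≤ 1 / (2 * δ + 1) / (G.degree x : ℝ) * (D : ℝ) := this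
    · rw [min_eq_right hle, hr1, hr2]
      have hpos : (0:ℝ) ≤ 1 / (2 * δ + 1) / (G.degree x : ℝ) := by positivity
      have := mul_le_mul_of_nonneg_left (sub_le_iff_le_add'.mpr hc1 :
        (n1 : ℝ) - (n2 : ℝ) ≤ (D : ℝ)) hpos
      calc (1 / (2 * δ + 1)) * ((1 / (G.degree x : ℝ)) * (n1 : ℝ) + δ)
            + (1 / (2 * δ + 1)) * ((1 / (G.degree x : ℝ)) * (n2 : ℝ) + δ)
            - 2 * ((1 / (2 * δ + 1)) * ((1 / (G.degree x : ℝ)) * (n2 : ℝ) + δ))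
          = 1 / (2 * δ + 1) / (G.degree x : ℝ) * ((n1 : ℝ) - (n2 : ℝ)) := by
            field_simp; ring
        _ ≤ 1 / (2 * δ + 1) / (G.degree x : ℝ) * (D : ℝ) := this
  · rw [if_neg h, if_neg h]
    have hcount : G.degree x ≤ n1 + n2 + D := by
      have hsub : univ.filter (fun y => G.Adj x y)
          ⊆ ((univ.filter fun y => G.Adj x y ∧ a y ≠ a x)
            ∪ (univ.filter fun y => G.Adj x y ∧ b y ≠ b x))
            ∪ (univ.filter fun y => G.Adj x y ∧ a y ≠ b y) := by
        intro y hy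
        simp only [mem_filter, mem_univ, true_and, Finset.mem_union] at hy ⊢
        by_cases h1 : a y = a x
        · by_cases h2 : b y = b x
          · exact Or.inr ⟨hy, by rw [h1, h2]; exact h⟩
          · exact Or.inl (Or.inr ⟨hy, h2⟩)
        · exact Or.inl (Or.inl ⟨hy, h1⟩)
      have hdeg_eq : G.degree x = (univ.filter (fun y => G.Adj x y)).card := by
        rw [← SimpleGraph.neighborFinset_eq_filter]; rfl
      calc G.degree x = (univ.filter (fun y => G.Adj x y)).card := hdeg_eq
        _ ≤ _ := Finset.card_le_card hsub
        _ ≤ _ := le_trans (Finset.card_union_le _ _)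
            (by exact Nat.add_le_add_right (Finset.card_union_le _ _) _)
    have hcast : (G.degree x : ℝ) ≤ (n1 : ℝ) + (n2 : ℝ) + (D : ℝ) := by exact_mod_cast hcount
    rw [hr1, hr2]
    have hkey : (1 / (2 * δ + 1)) / (G.degree x : ℝ) * ((G.degree x : ℝ))
        = 1 / (2 * δ + 1) := by field_simp
    have hpos : (0:ℝ) ≤ 1 / (2 * δ + 1) / (G.degree x : ℝ) := by positivity
    have hmul := mul_le_mul_of_nonneg_left hcast hpos
    rw [hkey] at hmul
    have hone : (1 / (2 * δ + 1)) * (2 * δ + 1) = 1 := by field_simp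
    have hexp : (1 / (2 * δ + 1)) / (G.degree x : ℝ) * ((n1 : ℝ) + (n2 : ℝ))
        = (1 / (2 * δ + 1)) * ((1 / (G.degree x : ℝ)) * (n1 : ℝ))
          + (1 / (2 * δ + 1)) * ((1 / (G.degree x : ℝ)) * (n2 : ℝ)) := by
      field_simp
    nlinarith [hmul, hone]

lemma NmatV_colsum (hδ : 0 < δ) (hdeg : ∀ v, 1 ≤ G.degree v) :
    Matrix.vecMul (fun _ => (1:ℝ)) (NmatV G δ)
      = (-(2 * δ / (2 * δ + 1))) • (fun _ => (1:ℝ)) := by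
  ext x
  have h2d : (0:ℝ) < 2 * δ + 1 := by linarith
  have hd0 : (0:ℝ) < (G.degree x : ℝ) := by
    have := hdeg x; exact_mod_cast Nat.lt_of_lt_of_le Nat.zero_lt_one this
  rw [Matrix.vecMul]
  simp only [dotProduct, NmatV, one_mul, Pi.smul_apply, smul_eq_mul, mul_one]
  rw [Finset.sum_sub_distrib]
  have e1 : ∑ y : V, (if G.Adj x y then (1 / (2 * δ + 1)) / (G.degree x : ℝ) else 0)
      = 1 / (2 * δ + 1) := by
    rw [← Finset.sum_filter, Finset.sum_const, nsmul_eq_mul]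
    have : ((univ.filter (fun y => G.Adj x y)).card : ℝ) = (G.degree x : ℝ) := by
      congr 1
      rw [← SimpleGraph.neighborFinset_eq_filter]; rfl
    rw [this]
    field_simp
  have e2 : ∑ y : V, (if y = x then (1:ℝ) else 0) = 1 := by
    rw [Finset.sum_ite_eq' univ x]; simp
  rw [e1, e2]
  field_simp
  ring

end CPL3

lemma vecMul_apply {ι κ : Type*} [Fintype ι] (v : ι → ℝ) (M : Matrix ι κ ℝ) (j : κ) :
    Matrix.vecMul v M j = ∑ i, v i * M i j := rfl

/-- Convergence to equilibrium for the noisy voter model: for every stationary distribution `μ`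
(`μ·Q = 0`), every initial configuration `η` and every `t ≥ 0`,
`‖P_t(η,·) − μ‖ ≤ n·exp(−(2δ/(2δ+1))·t)`. -/
theorem noisy_voter_convergence_to_stationarity
    {V : Type*} [Fintype V] [DecidableEq V] (δ : ℝ) (hδ : 0 < δ)
    (G : SimpleGraph V) [DecidableRel G.Adj] (hdeg : ∀ v, 1 ≤ G.degree v)
    (μ : (V → Bool) → ℝ) (hμ0 : ∀ σ, 0 ≤ μ σ) (hμ1 : ∑ σ, μ σ = 1)
    (hstat : Matrix.vecMul μ (nvQ G δ) = 0)
    (η : V → Bool) (t : ℝ) (ht : 0 ≤ t) :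
    tvDist (fun σ => NormedSpace.exp (t • nvQ G δ) η σ) μ ≤
      (Fintype.card V : ℝ) * Real.exp (-(2 * δ / (2 * δ + 1)) * t) := by
  classical
  have h2d : (0:ℝ) < 2 * δ + 1 := by linarith
  set eQ := NormedSpace.exp (t • nvQ G δ) with heQ
  set E := NormedSpace.exp (t • cplQ G δ) with hE
  set EN := NormedSpace.exp (t • NmatV G δ) with hEN
  set ν₀ : (V → Bool) × (V → Bool) → ℝ :=
    fun p => (if p.1 = η then (1:ℝ) else 0) * μ p.2 with hν₀
  have hν₀nn : ∀ p, 0 ≤ ν₀ p := fun p =>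
    mul_nonneg (by split <;> norm_num) (hμ0 p.2)
  have hν₀mass : ∑ p, ν₀ p = 1 := by
    rw [Fintype.sum_prod_type]
    have hstep : ∀ a : V → Bool, ∑ b, (if a = η then (1:ℝ) else 0) * μ b
        = (if a = η then (1:ℝ) else 0) := by
      intro a
      rw [← Finset.mul_sum, hμ1, mul_one]
    rw [Finset.sum_congr rfl fun a _ => hstep a, Finset.sum_ite_eq' univ η]
    simp
  have hcploff : ∀ (p q : (V → Bool) × (V → Bool)), p ≠ q → 0 ≤ cplQ G δ p q :=
    fun p q hpq => cplQ_offdiag_nonneg G δ hδ p q hpq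
  have hNoff : ∀ (y x : V), y ≠ x → 0 ≤ NmatV G δ y x :=
    fun y x h => NmatV_offdiag G δ hδ y x h
  have hEnn : ∀ p q, 0 ≤ E p q := fun p q => matExp_nonneg_of_offdiag hcploff ht p q
  have hENnn : ∀ y x, 0 ≤ EN y x := fun y x => matExp_nonneg_of_offdiag hNoff ht y x
  set π := Matrix.vecMul ν₀ E with hπ
  have hπnn : ∀ p, 0 ≤ π p := by
    intro p
    rw [hπ, vecMul_apply]
    exact Finset.sum_nonneg fun q _ => mul_nonneg (hν₀nn q) (hEnn q p)
  have hint1 : E * proj1 (V := V) = proj1 (V := V) * eQ := by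
    rw [hE, heQ]
    exact matExp_intertwine _ _ _ (by rw [Matrix.smul_mul, cplQ_proj1, Matrix.mul_smul])
  have hint2 : E * proj2 (V := V) = proj2 (V := V) * eQ := by
    rw [hE, heQ]
    exact matExp_intertwine _ _ _ (by rw [Matrix.smul_mul, cplQ_proj2, Matrix.mul_smul])
  have hνproj1 : Matrix.vecMul ν₀ proj1 = fun s => if η = s then (1:ℝ) else 0 := by
    ext s
    rw [vecMul_apply, Fintype.sum_prod_type]
    have hb : ∀ a : V → Bool, ∑ b, ν₀ (a, b) * proj1 (a, b) s
        = (if a = η then (1:ℝ) else 0) * (if a = s then 1 else 0) := by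
      intro a
      have hterm : ∀ b, ν₀ (a, b) * proj1 (a, b) s
          = ((if a = η then (1:ℝ) else 0) * (if a = s then 1 else 0)) * μ b := by
        intro b
        show ((if a = η then (1:ℝ) else 0) * μ b) * (if a = s then 1 else 0) = _
        ring
      rw [Finset.sum_congr rfl fun b _ => hterm b, ← Finset.mul_sum, hμ1, mul_one]
    rw [Finset.sum_congr rfl fun a _ => hb a]
    simp only [ite_mul, one_mul, zero_mul]
    rw [Finset.sum_ite_eq' univ η]
    simp only [mem_univ, if_true]
  have hνproj2 : Matrix.vecMul ν₀ proj2 = μ := by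
    ext s
    rw [vecMul_apply, Fintype.sum_prod_type]
    have hb : ∀ a : V → Bool, ∑ b, ν₀ (a, b) * proj2 (a, b) s
        = (if a = η then (1:ℝ) else 0) * μ s := by
      intro a
      have hterm : ∀ b, ν₀ (a, b) * proj2 (a, b) s
          = (if a = η then (1:ℝ) else 0) * (if b = s then μ b else 0) := by
        intro b
        show ((if a = η then (1:ℝ) else 0) * μ b) * (if b = s then 1 else 0) = _
        by_cases hbs : b = s
        · rw [if_pos hbs, if_pos hbs, mul_one]
        · rw [if_neg hbs, if_neg hbs, mul_zero, mul_zero]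
      rw [Finset.sum_congr rfl fun b _ => hterm b, ← Finset.mul_sum,
        Finset.sum_ite_eq' univ s]
      simp
    rw [Finset.sum_congr rfl fun a _ => hb a]
    simp only [ite_mul, one_mul, zero_mul]
    rw [Finset.sum_ite_eq' univ η]
    simp
  have hmarg1 : ∀ s : V → Bool, Matrix.vecMul π proj1 s = eQ η s := by
    intro s
    calc Matrix.vecMul π proj1 s
        = Matrix.vecMul ν₀ (E * proj1 (V := V)) s := by rw [hπ, Matrix.vecMul_vecMul]
      _ = Matrix.vecMul ν₀ (proj1 (V := V) * eQ) s := by rw [hint1]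
      _ = Matrix.vecMul (Matrix.vecMul ν₀ proj1) eQ s := by rw [Matrix.vecMul_vecMul]
      _ = eQ η s := by
          rw [hνproj1, vecMul_apply]
          simp only [ite_mul, one_mul, zero_mul]
          rw [Finset.sum_ite_eq univ η (fun s' => eQ s' s)]
          simp
  have hstat' : Matrix.vecMul μ (t • nvQ G δ) = (0:ℝ) • μ := by
    rw [vecMul_matsmul, hstat]
    simp
  have hμfix : Matrix.vecMul μ eQ = μ := by
    rw [heQ]
    have := matExp_vecMul_eigen (t • nvQ G δ) μ 0 hstat'
    simpa using this
  have hmarg2 : ∀ s : V → Bool, Matrix.vecMul π proj2 s = μ s := by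
    intro s
    calc Matrix.vecMul π proj2 s
        = Matrix.vecMul ν₀ (E * proj2 (V := V)) s := by rw [hπ, Matrix.vecMul_vecMul]
      _ = Matrix.vecMul ν₀ (proj2 (V := V) * eQ) s := by rw [hint2]
      _ = Matrix.vecMul (Matrix.vecMul ν₀ proj2) eQ s := by rw [Matrix.vecMul_vecMul]
      _ = μ s := by rw [hνproj2, hμfix]
  have hsumA1 : ∀ A : Finset (V → Bool),
      ∑ s ∈ A, eQ η s = ∑ p, π p * (if p.1 ∈ A then (1:ℝ) else 0) := by
    intro A
    have h1 : ∀ s, eQ η s = ∑ p, π p * proj1 p s := fun s => by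
      rw [← hmarg1 s, vecMul_apply]
    rw [Finset.sum_congr rfl fun s _ => h1 s, Finset.sum_comm]
    refine Finset.sum_congr rfl fun p _ => ?_
    rw [← Finset.mul_sum]
    congr 1
    show (∑ s ∈ A, if p.1 = s then (1:ℝ) else 0) = _
    rw [Finset.sum_ite_eq A p.1 (fun _ => (1:ℝ))]
  have hsumA2 : ∀ A : Finset (V → Bool),
      ∑ s ∈ A, μ s = ∑ p, π p * (if p.2 ∈ A then (1:ℝ) else 0) := by
    intro A
    have h1 : ∀ s, μ s = ∑ p, π p * proj2 p s := fun s => by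
      rw [← hmarg2 s, vecMul_apply]
    rw [Finset.sum_congr rfl fun s _ => h1 s, Finset.sum_comm]
    refine Finset.sum_congr rfl fun p _ => ?_
    rw [← Finset.mul_sum]
    congr 1
    show (∑ s ∈ A, if p.2 = s then (1:ℝ) else 0) = _
    rw [Finset.sum_ite_eq A p.2 (fun _ => (1:ℝ))]
  unfold tvDist
  refine Finset.sup'_le _ _ fun A hA => ?_
  have hrewrite : ∑ s ∈ A, (fun σ => NormedSpace.exp (t • nvQ G δ) η σ) s - ∑ s ∈ A, μ s
      = ∑ p, (π p * (if p.1 ∈ A then (1:ℝ) else 0) - π p * (if p.2 ∈ A then (1:ℝ) else 0)) := by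
    rw [Finset.sum_sub_distrib]
    rw [show (∑ s ∈ A, (fun σ => NormedSpace.exp (t • nvQ G δ) η σ) s) = ∑ s ∈ A, eQ η s
      from rfl, hsumA1 A, hsumA2 A]
  rw [hrewrite]
  have habs : |∑ p, (π p * (if p.1 ∈ A then (1:ℝ) else 0)
      - π p * (if p.2 ∈ A then (1:ℝ) else 0))| ≤ ∑ p, π p * (∑ x, GmMat p x) := by
    refine (Finset.abs_sum_le_sum_abs _ _).trans (Finset.sum_le_sum fun p _ => ?_)
    rw [← mul_sub, abs_mul, abs_of_nonneg (hπnn p)]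
    refine mul_le_mul_of_nonneg_left ?_ (hπnn p)
    by_cases hp12 : p.1 = p.2
    · rw [hp12, sub_self, abs_zero]
      exact Finset.sum_nonneg fun x _ => GmMat_nonneg p x
    · obtain ⟨x₀, hx₀⟩ := Function.ne_iff.mp hp12
      have h1 : |(if p.1 ∈ A then (1:ℝ) else 0) - (if p.2 ∈ A then (1:ℝ) else 0)| ≤ 1 := by
        split_ifs <;> norm_num
      have hgm : GmMat p x₀ = 1 := if_neg hx₀
      have h2 : (1:ℝ) ≤ ∑ x, GmMat p x := by
        calc (1:ℝ) = GmMat p x₀ := hgm.symm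
          _ ≤ ∑ x, GmMat p x :=
            Finset.single_le_sum (fun x _ => GmMat_nonneg p x) (mem_univ x₀)
      linarith
  have hswap : ∑ p, π p * (∑ x, GmMat p x)
      = ∑ x : V, Matrix.vecMul ν₀ (E * GmMat (V := V)) x := by
    calc ∑ p, π p * ∑ x, GmMat p x = ∑ p, ∑ x, π p * GmMat p x := by
          exact Finset.sum_congr rfl fun p _ => Finset.mul_sum _ _ _
      _ = ∑ x, ∑ p, π p * GmMat p x := Finset.sum_comm
      _ = ∑ x, Matrix.vecMul π (GmMat (V := V)) x :=
          Finset.sum_congr rfl fun x _ => (vecMul_apply _ _ _).symm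
      _ = ∑ x, Matrix.vecMul ν₀ (E * GmMat (V := V)) x := by
          rw [show Matrix.vecMul π (GmMat (V := V)) = Matrix.vecMul ν₀ (E * GmMat (V := V))
            from by rw [hπ, Matrix.vecMul_vecMul]]
  have hcomp : ∀ x, Matrix.vecMul ν₀ (E * GmMat (V := V)) x
      ≤ Matrix.vecMul ν₀ (GmMat (V := V) * EN) x := by
    intro x
    rw [vecMul_apply, vecMul_apply]
    refine Finset.sum_le_sum fun q _ => mul_le_mul_of_nonneg_left ?_ (hν₀nn q)
    rw [hE, hEN]
    exact matExp_comparison (cplQ G δ) (NmatV G δ) (GmMat (V := V)) ht hcploff hNoff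
      (key_ineq G δ hδ hdeg) q x
  have hwle : ∀ y, Matrix.vecMul ν₀ (GmMat (V := V)) y ≤ 1 := by
    intro y
    rw [vecMul_apply]
    calc ∑ q, ν₀ q * GmMat q y ≤ ∑ q, ν₀ q * 1 :=
        Finset.sum_le_sum fun q _ => mul_le_mul_of_nonneg_left (GmMat_le_one q y) (hν₀nn q)
      _ = 1 := by simp only [mul_one]; exact hν₀mass
  have hcol : Matrix.vecMul (fun _ => (1:ℝ)) EN
      = Real.exp (-(2 * δ / (2 * δ + 1)) * t) • (fun _ => (1:ℝ)) := by
    rw [hEN]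
    have h1 : Matrix.vecMul (fun _ => (1:ℝ)) (t • NmatV G δ)
        = (-(2 * δ / (2 * δ + 1)) * t) • (fun _ => (1:ℝ) : V → ℝ) := by
      rw [vecMul_matsmul, NmatV_colsum G δ hδ hdeg, smul_smul, mul_comm]
    exact matExp_vecMul_eigen (t • NmatV G δ) (fun _ => (1:ℝ))
      (-(2 * δ / (2 * δ + 1)) * t) h1
  calc |∑ p, (π p * (if p.1 ∈ A then (1:ℝ) else 0)
        - π p * (if p.2 ∈ A then (1:ℝ) else 0))|
      ≤ ∑ p, π p * (∑ x, GmMat p x) := habs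
    _ = ∑ x : V, Matrix.vecMul ν₀ (E * GmMat (V := V)) x := hswap
    _ ≤ ∑ x : V, Matrix.vecMul ν₀ (GmMat (V := V) * EN) x :=
        Finset.sum_le_sum fun x _ => hcomp x
    _ = ∑ x : V, Matrix.vecMul (Matrix.vecMul ν₀ (GmMat (V := V))) EN x := by
        rw [show Matrix.vecMul ν₀ (GmMat (V := V) * EN)
          = Matrix.vecMul (Matrix.vecMul ν₀ (GmMat (V := V))) EN from
          (Matrix.vecMul_vecMul _ _ _).symm]
    _ ≤ ∑ x : V, Real.exp (-(2 * δ / (2 * δ + 1)) * t) := by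
        refine Finset.sum_le_sum fun x _ => ?_
        rw [vecMul_apply]
        calc ∑ y, Matrix.vecMul ν₀ (GmMat (V := V)) y * EN y x
            ≤ ∑ y, 1 * EN y x :=
              Finset.sum_le_sum fun y _ =>
                mul_le_mul_of_nonneg_right (hwle y) (hENnn y x)
          _ = Matrix.vecMul (fun _ => (1:ℝ)) EN x := by rw [vecMul_apply]
          _ = Real.exp (-(2 * δ / (2 * δ + 1)) * t) := by rw [hcol]; simp
    _ = (Fintype.card V : ℝ) * Real.exp (-(2 * δ / (2 * δ + 1)) * t) := by
        rw [Finset.sum_const, Finset.card_univ, nsmul_eq_mul]
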